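/- Let P ≥ 1, γ > 0, and 0 ≤ β < 1/2 (equivalently temperature T = 1/β > 2). Then the only p ∈ ℝ^P satisfying p = ⟨ξ tanh(β ξ·p)⟩_ξ + √γ ⟨η tanh((β/√γ) η·p)⟩_η (with ξ, η uniform on {−1,1}^P) is p = 0. -/
import Mathlib


open Finset

/-- `±1` value of a boolean. -/
def spin (b : Bool) : ℝ := if b then 1 else -1

/-- Expectation with respect to `ξ` uniform on `{-1,1}^P`. -/
noncomputable def unifExp (P : ℕ) (f : (Fin P → ℝ) → ℝ) : ℝ :=
  (∑ b : Fin P → Bool, f (fun μ => spin (b μ))) / 2 ^ P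

lemma spin_not (x : Bool) : spin (!x) = -spin x := by cases x <;> simp [spin]

lemma spin_mul_self (x : Bool) : spin x * spin x = 1 := by cases x <;> norm_num [spin]

lemma sinh_le_mul_cosh {x : ℝ} (hx : 0 ≤ x) : Real.sinh x ≤ x * Real.cosh x := by
  have hmono : MonotoneOn (fun y => y * Real.cosh y - Real.sinh y) (Set.Ici (0:ℝ)) := by
    apply monotoneOn_of_deriv_nonneg (convex_Ici _)
    · exact ((continuous_id.mul Real.continuous_cosh).sub Real.continuous_sinh).continuousOn
    · intro y hy
      exact ((differentiableAt_id.mul (Real.differentiable_cosh _)).sub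
        (Real.differentiable_sinh _)).differentiableWithinAt
    · intro y hy
      rw [interior_Ici, Set.mem_Ioi] at hy
      have hd : HasDerivAt (fun y => y * Real.cosh y - Real.sinh y)
          ((1 * Real.cosh y + y * Real.sinh y) - Real.cosh y) y :=
        ((hasDerivAt_id y).mul (Real.hasDerivAt_cosh y)).sub (Real.hasDerivAt_sinh y)
      rw [hd.deriv]
      have : (1 * Real.cosh y + y * Real.sinh y) - Real.cosh y = y * Real.sinh y := by ring
      rw [this]
      exact mul_nonneg hy.le (Real.sinh_nonneg_iff.2 hy.le)
  have h := hmono Set.self_mem_Ici (Set.mem_Ici.2 hx) hx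
  simp only [Real.sinh_zero, Real.cosh_zero, mul_one, zero_mul, sub_zero] at h
  linarith

lemma tanh_le_self {x : ℝ} (hx : 0 ≤ x) : Real.tanh x ≤ x := by
  rw [Real.tanh_eq_sinh_div_cosh, div_le_iff₀ (Real.cosh_pos x)]
  exact sinh_le_mul_cosh hx

lemma abs_tanh_le (x : ℝ) : |Real.tanh x| ≤ |x| := by
  rcases le_total 0 x with h | h
  · rw [abs_of_nonneg h, abs_of_nonneg]
    · exact tanh_le_self h
    · rw [Real.tanh_eq_sinh_div_cosh]
      exact div_nonneg (Real.sinh_nonneg_iff.2 h) (Real.cosh_pos x).le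
  · have h2 := tanh_le_self (neg_nonneg.2 h)
    rw [Real.tanh_neg] at h2
    rw [abs_of_nonpos h, abs_of_nonpos]
    · linarith
    · rw [Real.tanh_eq_sinh_div_cosh]
      exact div_nonpos_of_nonpos_of_nonneg (Real.sinh_nonpos_iff.2 h) (Real.cosh_pos x).le

lemma mul_tanh_le {c : ℝ} (hc : 0 ≤ c) (s : ℝ) : s * Real.tanh (c * s) ≤ c * s ^ 2 := by
  calc s * Real.tanh (c * s) ≤ |s * Real.tanh (c * s)| := le_abs_self _
    _ = |s| * |Real.tanh (c * s)| := abs_mul _ _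
    _ ≤ |s| * |c * s| := mul_le_mul_of_nonneg_left (abs_tanh_le _) (abs_nonneg _)
    _ = c * s ^ 2 := by rw [abs_mul, abs_of_nonneg hc, ← sq_abs s]; ring

/-- Orthogonality: `∑_b spin(b ρ) * spin(b σ) = 0` for `ρ ≠ σ`. -/
lemma sum_spin_mul_spin {P : ℕ} {ρ σ : Fin P} (h : ρ ≠ σ) :
    ∑ b : Fin P → Bool, spin (b ρ) * spin (b σ) = 0 := by
  set u : (Fin P → Bool) → (Fin P → Bool) :=
    fun b => Function.update b σ (!(b σ)) with hu
  have hinv : Function.Involutive u := by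
    intro b; funext i
    by_cases hi : i = σ
    · subst hi; simp [hu, Function.update_self]
    · simp [hu, Function.update_of_ne hi]
  have key : ∑ b : Fin P → Bool, spin ((u b) ρ) * spin ((u b) σ)
      = ∑ b : Fin P → Bool, spin (b ρ) * spin (b σ) :=
    Fintype.sum_bijective u hinv.bijective _ _ (fun b => rfl)
  have heval : ∀ b : Fin P → Bool, spin ((u b) ρ) * spin ((u b) σ)
      = - (spin (b ρ) * spin (b σ)) := by
    intro b
    have h1 : (u b) ρ = b ρ := Function.update_of_ne h _ _
    have h2 : (u b) σ = !(b σ) := Function.update_self _ _ _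
    rw [h1, h2, spin_not]; ring
  rw [Finset.sum_congr rfl (fun b _ => heval b), Finset.sum_neg_distrib] at key
  linarith

/-- Second moment of the overlap. -/
lemma sum_sq_overlap {P : ℕ} (p : Fin P → ℝ) :
    ∑ b : Fin P → Bool, (∑ ρ, spin (b ρ) * p ρ) ^ 2 = 2 ^ P * ∑ ρ, p ρ ^ 2 := by
  have expand : ∀ b : Fin P → Bool, (∑ ρ, spin (b ρ) * p ρ) ^ 2
      = ∑ ρ, ∑ σ, (spin (b ρ) * spin (b σ)) * (p ρ * p σ) := by
    intro b
    rw [sq, Finset.sum_mul_sum]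
    exact Finset.sum_congr rfl fun ρ _ => Finset.sum_congr rfl fun σ _ => by ring
  rw [Finset.sum_congr rfl (fun b _ => expand b), Finset.sum_comm]
  have outer : ∀ ρ : Fin P, ∑ b : Fin P → Bool, ∑ σ, (spin (b ρ) * spin (b σ)) * (p ρ * p σ)
      = 2 ^ P * p ρ ^ 2 := by
    intro ρ
    rw [Finset.sum_comm]
    have inner : ∀ σ : Fin P, ∑ b : Fin P → Bool, (spin (b ρ) * spin (b σ)) * (p ρ * p σ)
        = if σ = ρ then 2 ^ P * p ρ ^ 2 else 0 := by
      intro σ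
      rw [← Finset.sum_mul]
      by_cases hσ : σ = ρ
      · subst hσ
        simp only [if_true]
        rw [Finset.sum_congr rfl (fun b _ => spin_mul_self (b σ)), Finset.sum_const]
        simp only [Finset.card_univ, Fintype.card_fun, Fintype.card_bool, Fintype.card_fin,
          nsmul_eq_mul, mul_one]
        push_cast
        ring
      · rw [sum_spin_mul_spin (Ne.symm hσ), zero_mul, if_neg hσ]
    rw [Finset.sum_congr rfl (fun σ _ => inner σ), Finset.sum_ite_eq' Finset.univ ρ]
    simp
  rw [Finset.sum_congr rfl (fun ρ _ => outer ρ), ← Finset.mul_sum]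

/-- Key bound on a single tanh sum. -/
lemma sum_overlap_tanh_le {P : ℕ} (p : Fin P → ℝ) {c : ℝ} (hc : 0 ≤ c) :
    ∑ b : Fin P → Bool, (∑ ρ, spin (b ρ) * p ρ) *
      Real.tanh (c * ∑ ρ, spin (b ρ) * p ρ) ≤ c * 2 ^ P * ∑ ρ, p ρ ^ 2 := by
  calc ∑ b : Fin P → Bool, (∑ ρ, spin (b ρ) * p ρ) *
        Real.tanh (c * ∑ ρ, spin (b ρ) * p ρ)
      ≤ ∑ b : Fin P → Bool, c * (∑ ρ, spin (b ρ) * p ρ) ^ 2 :=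
        Finset.sum_le_sum fun b _ => mul_tanh_le hc _
    _ = c * (2 ^ P * ∑ ρ, p ρ ^ 2) := by rw [← Finset.mul_sum, sum_sq_overlap]
    _ = c * 2 ^ P * ∑ ρ, p ρ ^ 2 := by ring

/-- Pairing `p` against a `unifExp` term gives an overlap sum. -/
lemma pair_unifExp {P : ℕ} (p : Fin P → ℝ) (c : ℝ) :
    ∑ μ, p μ * unifExp P (fun ξ => ξ μ * Real.tanh (c * ∑ ρ, ξ ρ * p ρ))
    = (∑ b : Fin P → Bool, (∑ ρ, spin (b ρ) * p ρ) *
        Real.tanh (c * ∑ ρ, spin (b ρ) * p ρ)) / 2 ^ P := by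
  unfold unifExp
  have step : ∀ μ : Fin P,
      p μ * ((∑ b : Fin P → Bool, spin (b μ) *
          Real.tanh (c * ∑ ρ, spin (b ρ) * p ρ)) / 2 ^ P)
      = (∑ b : Fin P → Bool, p μ * (spin (b μ) *
          Real.tanh (c * ∑ ρ, spin (b ρ) * p ρ))) / 2 ^ P := by
    intro μ; rw [← mul_div_assoc, Finset.mul_sum]
  rw [Finset.sum_congr rfl (fun μ _ => step μ), ← Finset.sum_div, Finset.sum_comm]
  congr 1
  apply Finset.sum_congr rfl
  intro b _
  rw [Finset.sum_mul]
  apply Finset.sum_congr rfl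
  intro μ _
  ring

/-- Above the critical temperature `T_c = 2` (i.e. for `0 ≤ β < 1/2`), the only
solution of the three-layer RBM self-consistent equation is `p = 0`. -/
theorem stmt11 (P : ℕ) (hP : 1 ≤ P) (β γ : ℝ) (hβ0 : 0 ≤ β) (hβ : β < 1 / 2)
    (hγ : 0 < γ) (p : Fin P → ℝ)
    (hp : ∀ μ, p μ =
      unifExp P (fun ξ => ξ μ * Real.tanh (β * ∑ ρ, ξ ρ * p ρ))
      + Real.sqrt γ *
          unifExp P (fun η => η μ * Real.tanh ((β / Real.sqrt γ) * ∑ ρ, η ρ * p ρ))) :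
    p = 0 := by
  have hsγ : (0:ℝ) < Real.sqrt γ := Real.sqrt_pos.2 hγ
  set Q : ℝ := ∑ μ, p μ ^ 2 with hQ
  have hQ0 : 0 ≤ Q := Finset.sum_nonneg fun μ _ => sq_nonneg _
  have h2P : (0:ℝ) < 2 ^ P := by positivity
  have key : Q ≤ 2 * β * Q := by
    have hQeq : Q = (∑ μ, p μ * unifExp P (fun ξ => ξ μ *
          Real.tanh (β * ∑ ρ, ξ ρ * p ρ)))
        + Real.sqrt γ * ∑ μ, p μ * unifExp P (fun η => η μ *
          Real.tanh ((β / Real.sqrt γ) * ∑ ρ, η ρ * p ρ)) := by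
      rw [hQ, Finset.mul_sum, ← Finset.sum_add_distrib]
      apply Finset.sum_congr rfl
      intro μ _
      nth_rewrite 1 [sq, hp μ]
      ring
    rw [pair_unifExp, pair_unifExp] at hQeq
    have h1 : (∑ b : Fin P → Bool, (∑ ρ, spin (b ρ) * p ρ) *
        Real.tanh (β * ∑ ρ, spin (b ρ) * p ρ)) / 2 ^ P ≤ β * Q := by
      rw [div_le_iff₀ h2P]
      calc _ ≤ β * 2 ^ P * Q := sum_overlap_tanh_le p hβ0
        _ = β * Q * 2 ^ P := by ring
    have h2 : (∑ b : Fin P → Bool, (∑ ρ, spin (b ρ) * p ρ) *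
        Real.tanh ((β / Real.sqrt γ) * ∑ ρ, spin (b ρ) * p ρ)) / 2 ^ P
        ≤ (β / Real.sqrt γ) * Q := by
      rw [div_le_iff₀ h2P]
      calc _ ≤ (β / Real.sqrt γ) * 2 ^ P * Q :=
            sum_overlap_tanh_le p (div_nonneg hβ0 hsγ.le)
        _ = (β / Real.sqrt γ) * Q * 2 ^ P := by ring
    have h3 : Real.sqrt γ * ((∑ b : Fin P → Bool, (∑ ρ, spin (b ρ) * p ρ) *
        Real.tanh ((β / Real.sqrt γ) * ∑ ρ, spin (b ρ) * p ρ)) / 2 ^ P)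
        ≤ β * Q := by
      calc _ ≤ Real.sqrt γ * ((β / Real.sqrt γ) * Q) :=
            mul_le_mul_of_nonneg_left h2 hsγ.le
        _ = β * Q := by field_simp
    linarith
  have hQzero : Q = 0 := by nlinarith
  funext μ
  have hμ : p μ ^ 2 = 0 :=
    (Finset.sum_eq_zero_iff_of_nonneg (fun i _ => sq_nonneg (p i))).1 hQzero μ
      (Finset.mem_univ μ)
  have := pow_eq_zero_iff (two_ne_zero) |>.1 hμ
  simpa using this
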